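/- Axiom (R7) (the second involution law) is independent of the remaining Tarski axioms: on a Boolean algebra with at least four elements with a chosen element 1' distinct from 0 and 1, define r;s = r if s=1' and r;s = 0 otherwise, and let converse be the identity function. Then (R1)-(R6), (R8)-(R10) hold but (R7) fails. -/
import Mathlib


/-- Axiom (R7) (the second involution law) is independent of the remaining
Tarski axioms: on a Boolean algebra with at least four elements, with a chosen
element 1' distinct from 0 and 1 (so that 0, 1', -1', 1 are four distinct
elements), define r;s = r if s = 1' and r;s = 0 otherwise, and let converse be
the identity.  Then (R1)-(R6) and (R8)-(R10) hold but (R7) fails. -/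
theorem R7_independent {A : Type*} [BooleanAlgebra A] [DecidableEq A]
    (e : A) (he0 : e ≠ ⊥) (he1 : e ≠ ⊤) :
    let mul : A → A → A := fun r s => if s = e then r else ⊥
    (∀ r s : A, r ⊔ s = s ⊔ r) ∧
    (∀ r s t : A, r ⊔ (s ⊔ t) = (r ⊔ s) ⊔ t) ∧
    (∀ r s : A, (rᶜ ⊔ s)ᶜ ⊔ (rᶜ ⊔ sᶜ)ᶜ = r) ∧
    (∀ r s t : A, mul r (mul s t) = mul (mul r s) t) ∧
    (∀ r : A, mul r e = r) ∧
    (∀ r : A, id (id r) = r) ∧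
    (∀ r s t : A, mul (r ⊔ s) t = mul r t ⊔ mul s t) ∧
    (∀ r s : A, id (r ⊔ s) = id r ⊔ id s) ∧
    (∀ r s : A, mul (id r) (mul r s)ᶜ ⊔ sᶜ = sᶜ) ∧
    ¬ (∀ r s : A, id (mul r s) = mul (id s) (id r)) := by
  intro mul
  refine ⟨fun r s => sup_comm r s, fun r s t => (sup_assoc r s t).symm,
    fun r s => ?_, fun r s t => ?_, fun r => ?_, fun r => rfl,
    fun r s t => ?_, fun r s => rfl, fun r s => ?_, fun h => ?_⟩
  · simp [compl_sup, compl_compl, ← inf_sup_left]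
  · simp only [mul]
    by_cases ht : t = e <;> by_cases hs : s = e <;>
      simp [ht, hs, he0, he0.symm]
  · simp [mul]
  · simp only [mul]
    by_cases ht : t = e <;> simp [ht]
  · simp only [mul, id]
    by_cases h1 : (if s = e then r else ⊥ : A)ᶜ = e
    · by_cases hs : s = e
      · subst hs
        rw [if_pos rfl] at h1
        rw [if_pos rfl, if_pos h1, ← h1, compl_compl, sup_idem]
      · rw [if_neg hs, compl_bot] at h1
        exact absurd h1.symm he1
    · simp [h1]
  · have := h ⊤ e
    simp only [mul, id, if_pos rfl, if_neg he1.symm] at this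
    -- this : ⊤ = ⊥  (since ⊤ ≠ e means mul e ⊤ = ⊥)
    have hb : e ≤ ⊥ := by rw [← this]; exact le_top
    exact he0 (le_bot_iff.mp hb)
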